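/- arXiv:2305.06884 — 4 statements merged into one kernel-verified Lean document; each statement's English description precedes it below -/
import Mathlib

section
/- (Hoeffding confidence sequence.) Let α ∈ (0,1), let (λ_t) be a predictable sequence with λ_t > 0, and let (c_t) be a predictable sequence with c_t ≥ max_{i∈N_t} π(i)/q_t(i) almost surely. Define m̂_t = (π(I_t)/q_t(I_t)) f(I_t) + Σ_{i=1}^{t−1} π(I_i) f(I_i), the weighted center μ̂_t(λ_1^t) = (Σ_{i=1}^t λ_i m̂_i)/(Σ_{i=1}^t λ_i), and C_t^H = (μ̂_t(λ_1^t) ± (log(2/α) + Σ_{i=1}^t λ_i² c_i²/8)/(Σ_{i=1}^t λ_i)) ∩ [0,1]. Then P(∃ t ∈ {1,…,N} : m* ∉ C_t^H) ≤ α. -/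
open MeasureTheory Finset

namespace RLFA

variable {Ω : Type*}

/-- `remaining I t ω` is the set `N_t = {1,…,N} \ {I_1, …, I_{t-1}}` of indices not yet
sampled before time `t`. -/
def remaining {N : ℕ} (I : ℕ → Ω → Fin N) (t : ℕ) (ω : Ω) : Finset (Fin N) :=
  Finset.univ \ (Finset.Icc 1 (t - 1)).image fun j => I j ω

/-- The filtration `F_t = σ(I_1, …, I_t)`. -/
def filt {N : ℕ} (I : ℕ → Ω → Fin N) (t : ℕ) : MeasurableSpace Ω :=
  ⨆ j ∈ Finset.Icc 1 t, MeasurableSpace.comap (I j) ⊤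

/-- The importance-weighted observation `Z_t = f(I_t) · π(I_t) / q_t(I_t)`. -/
noncomputable def Zt {N : ℕ} (π f : Fin N → ℝ) (q : ℕ → Ω → Fin N → ℝ)
    (I : ℕ → Ω → Fin N) (t : ℕ) (ω : Ω) : ℝ :=
  f (I t ω) * (π (I t ω) / q t ω (I t ω))

/-- `μ_t(m) = m − Σ_{j=1}^{t−1} π(I_j) f(I_j)`. -/
def muT {N : ℕ} (π f : Fin N → ℝ) (I : ℕ → Ω → Fin N) (m : ℝ) (t : ℕ) (ω : Ω) : ℝ :=
  m - ∑ j ∈ Finset.Icc 1 (t - 1), π (I j ω) * f (I j ω)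

/-- The running estimate `m̂_t = (π(I_t)/q_t(I_t)) f(I_t) + Σ_{i=1}^{t−1} π(I_i) f(I_i)`. -/
noncomputable def mhat {N : ℕ} (π f : Fin N → ℝ) (q : ℕ → Ω → Fin N → ℝ)
    (I : ℕ → Ω → Fin N) (t : ℕ) (ω : Ω) : ℝ :=
  π (I t ω) / q t ω (I t ω) * f (I t ω) +
    ∑ i ∈ Finset.Icc 1 (t - 1), π (I i ω) * f (I i ω)

/-- The weighted center `μ̂_t(λ_1^t) = (Σ_{i=1}^t λ_i m̂_i)/(Σ_{i=1}^t λ_i)`. -/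
noncomputable def hoefCenter {N : ℕ} (π f : Fin N → ℝ) (q : ℕ → Ω → Fin N → ℝ)
    (I : ℕ → Ω → Fin N) (lam : ℕ → Ω → ℝ) (t : ℕ) (ω : Ω) : ℝ :=
  (∑ i ∈ Finset.Icc 1 t, lam i ω * mhat π f q I i ω) / ∑ i ∈ Finset.Icc 1 t, lam i ω

/-- The Hoeffding radius `(log(2/α) + Σ_{i=1}^t λ_i² c_i²/8)/(Σ_{i=1}^t λ_i)`. -/
noncomputable def hoefRadius (α : ℝ) (lam c : ℕ → Ω → ℝ) (t : ℕ) (ω : Ω) : ℝ :=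
  (Real.log (2 / α) + ∑ i ∈ Finset.Icc 1 t, (lam i ω) ^ 2 * (c i ω) ^ 2 / 8) /
    ∑ i ∈ Finset.Icc 1 t, lam i ω


lemma bernoulli_mgf (p : ℝ) (hp : 0 ≤ p) (hp1 : p ≤ 1) (t : ℝ) :
    (1 - p) * Real.exp (-(p*t)) + p * Real.exp ((1-p)*t) ≤ Real.exp (t^2/8) := by
  set D : ℝ → ℝ := fun x => 1 - p + p * Real.exp x with hDdef
  have hDx : ∀ x, D x = 1 - p + p * Real.exp x := fun _ => rfl
  have hDpos : ∀ x, 0 < D x := by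
    intro x
    rcases eq_or_lt_of_le hp with h | h
    · simp [hDdef, ← h]
    · have := mul_pos h (Real.exp_pos x)
      simp only [hDdef]; linarith
  have hDne : ∀ x, D x ≠ 0 := fun x => (hDpos x).ne'
  have hDder : ∀ x, HasDerivAt D (p * Real.exp x) x := by
    intro x
    exact ((Real.hasDerivAt_exp x).const_mul p).const_add (1 - p)
  set h : ℝ → ℝ := fun x => p * Real.exp x / D x - p with hhdef
  have hh0 : h 0 = 0 := by simp [hhdef, hDdef]
  have hhder : ∀ x, HasDerivAt h (p * (1-p) * Real.exp x / (D x)^2) x := by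
    intro x
    have h1 : HasDerivAt (fun x => p * Real.exp x) (p * Real.exp x) x :=
      (Real.hasDerivAt_exp x).const_mul p
    have h2 := (h1.div (hDder x) (hDne x)).sub_const p
    refine h2.congr_deriv ?_
    rw [div_eq_div_iff (pow_ne_zero 2 (hDne x)) (pow_ne_zero 2 (hDne x)), hDx]
    ring
  have hbound : ∀ x, 0 ≤ p * (1-p) * Real.exp x / (D x)^2 ∧
      p * (1-p) * Real.exp x / (D x)^2 ≤ 1/4 := by
    intro x
    have hu0 : 0 ≤ p * Real.exp x / D x :=
      div_nonneg (mul_nonneg hp (Real.exp_pos x).le) (hDpos x).le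
    have hu1 : p * Real.exp x / D x ≤ 1 := by
      rw [div_le_one (hDpos x)]
      rw [hDx]; nlinarith [Real.exp_pos x]
    set u := p * Real.exp x / D x with hu
    have key : p * (1-p) * Real.exp x / (D x)^2 = u * (1 - u) := by
      rw [hu]
      field_simp [hDne x]
      rw [hDx]
      ring
    rw [key]
    constructor
    · nlinarith
    · nlinarith [sq_nonneg (u - 1/2)]
  have hnorm : ∀ x, |h x| ≤ |x| / 4 := by
    intro x
    rcases le_total 0 x with hx | hx
    · have := norm_image_sub_le_of_norm_deriv_le_segment'
        (f := h) (f' := fun x => p * (1-p) * Real.exp x / (D x)^2) (a := 0) (b := x) (C := 1/4)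
        (fun y _ => (hhder y).hasDerivWithinAt) (fun y _ => by
          rw [Real.norm_eq_abs, abs_of_nonneg (hbound y).1]; exact (hbound y).2)
        x (Set.right_mem_Icc.2 hx)
      rw [hh0, sub_zero, Real.norm_eq_abs] at this
      rw [abs_of_nonneg hx]
      linarith
    · have := norm_image_sub_le_of_norm_deriv_le_segment'
        (f := h) (f' := fun x => p * (1-p) * Real.exp x / (D x)^2) (a := x) (b := 0) (C := 1/4)
        (fun y _ => (hhder y).hasDerivWithinAt) (fun y _ => by
          rw [Real.norm_eq_abs, abs_of_nonneg (hbound y).1]; exact (hbound y).2)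
        0 (Set.right_mem_Icc.2 hx)
      rw [hh0, Real.norm_eq_abs, ← abs_neg, neg_sub, sub_zero] at this
      rw [abs_of_nonpos hx]
      linarith
  set g : ℝ → ℝ := fun x => Real.log (D x) - p * x - x^2/8 with hgdef
  have hg0 : g 0 = 0 := by simp [hgdef, hDdef]
  have hgder : ∀ x, HasDerivAt g (h x - x/4) x := by
    intro x
    have h1 : HasDerivAt (fun x => Real.log (D x)) (p * Real.exp x / D x) x :=
      (hDder x).log (hDne x)
    have h2 : HasDerivAt (fun x : ℝ => p * x) p x := by
      simpa using (hasDerivAt_id x).const_mul p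
    have h3 : HasDerivAt (fun x : ℝ => x^2/8) (x/4) x := by
      have := (hasDerivAt_pow 2 x).div_const 8
      refine this.congr_deriv ?_
      norm_num
      ring
    exact (h1.sub h2).sub h3
  have hgle : ∀ x, g x ≤ 0 := by
    intro x
    have hdiff : Differentiable ℝ g := fun y => (hgder y).differentiableAt
    have hcont : Continuous g := hdiff.continuous
    rcases le_total 0 x with hx | hx
    · have hanti : AntitoneOn g (Set.Icc 0 x) := by
        apply antitoneOn_of_deriv_nonpos (convex_Icc 0 x) hcont.continuousOn
        · intro y _
          exact (hdiff y).differentiableWithinAt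
        · intro y hy
          rw [interior_Icc] at hy
          rw [(hgder y).deriv]
          have h1 := hnorm y
          rw [abs_of_pos hy.1] at h1
          have := (abs_le.1 h1).2
          linarith
      have := hanti (Set.left_mem_Icc.2 hx) (Set.right_mem_Icc.2 hx) hx
      rwa [hg0] at this
    · have hmono : MonotoneOn g (Set.Icc x 0) := by
        apply monotoneOn_of_deriv_nonneg (convex_Icc x 0) hcont.continuousOn
        · intro y _
          exact (hdiff y).differentiableWithinAt
        · intro y hy
          rw [interior_Icc] at hy
          rw [(hgder y).deriv]
          have h1 := hnorm y
          rw [abs_of_neg hy.2] at h1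
          have := (abs_le.1 h1).1
          linarith
      have := hmono (Set.left_mem_Icc.2 hx) (Set.right_mem_Icc.2 hx) hx
      rwa [hg0] at this
  have hlog := hgle t
  simp only [hgdef] at hlog
  have hDle : D t ≤ Real.exp (p*t + t^2/8) := by
    rw [← Real.log_le_iff_le_exp (hDpos t)]
    linarith
  have hfinal : D t * Real.exp (-(p*t)) ≤ Real.exp (t^2/8) := by
    calc D t * Real.exp (-(p*t)) ≤ Real.exp (p*t + t^2/8) * Real.exp (-(p*t)) :=
          mul_le_mul_of_nonneg_right hDle (Real.exp_pos _).le
      _ = Real.exp (t^2/8) := by rw [← Real.exp_add]; ring_nf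
  calc (1 - p) * Real.exp (-(p*t)) + p * Real.exp ((1-p)*t)
      = D t * Real.exp (-(p*t)) := by
        rw [hDx, show (1-p)*t = t + -(p*t) by ring, Real.exp_add]
        ring
    _ ≤ Real.exp (t^2/8) := hfinal

lemma hoef_discrete {ι : Type*} (s : Finset ι) (q x : ι → ℝ)
    (hq0 : ∀ i ∈ s, 0 ≤ q i) (hq1 : ∑ i ∈ s, q i = 1)
    (c θ : ℝ) (hx0 : ∀ i ∈ s, 0 ≤ x i) (hxc : ∀ i ∈ s, x i ≤ c) :
    ∑ i ∈ s, q i * Real.exp (θ * (x i - ∑ j ∈ s, q j * x j)) ≤ Real.exp (θ^2 * c^2/8) := by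
  set m := ∑ j ∈ s, q j * x j with hm
  have hm0 : 0 ≤ m := sum_nonneg fun i hi => mul_nonneg (hq0 i hi) (hx0 i hi)
  have hmc : m ≤ c := by
    calc m ≤ ∑ i ∈ s, q i * c :=
          sum_le_sum fun i hi => mul_le_mul_of_nonneg_left (hxc i hi) (hq0 i hi)
      _ = c := by rw [← sum_mul, hq1, one_mul]
  have hc0 : 0 ≤ c := le_trans hm0 hmc
  rcases eq_or_lt_of_le hc0 with hc | hc
  · have hx : ∀ i ∈ s, x i = 0 := fun i hi =>
      le_antisymm (hc ▸ hxc i hi) (hx0 i hi)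
    have hm' : m = 0 := by
      rw [hm]; exact Finset.sum_eq_zero fun i hi => by rw [hx i hi, mul_zero]
    have hL : ∑ i ∈ s, q i * Real.exp (θ * (x i - m)) = 1 := by
      rw [← hq1]
      refine Finset.sum_congr rfl fun i hi => ?_
      rw [hx i hi, hm', sub_zero, mul_zero, Real.exp_zero, mul_one]
    rw [hL]
    exact Real.one_le_exp (by positivity)
  · set p := m / c with hp
    have hp0 : 0 ≤ p := div_nonneg hm0 hc0
    have hp1 : p ≤ 1 := (div_le_one hc).2 hmc
    have hconv : ∀ i ∈ s, Real.exp (θ * x i) ≤ (1 - x i / c) + x i / c * Real.exp (θ*c) := by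
      intro i hi
      have ha : (0:ℝ) ≤ 1 - x i / c := by
        have := (div_le_one hc).2 (hxc i hi); linarith
      have hb : (0:ℝ) ≤ x i / c := div_nonneg (hx0 i hi) hc0
      have hab : (1 - x i / c) + x i / c = 1 := by ring
      have h2 := convexOn_exp.2 (Set.mem_univ (0:ℝ)) (Set.mem_univ (θ*c)) ha hb hab
      simp only [smul_eq_mul, mul_zero, zero_add, Real.exp_zero, mul_one] at h2
      have harg : x i / c * (θ * c) = θ * x i := by field_simp
      rw [harg] at h2
      exact h2
    have key : ∑ i ∈ s, q i * Real.exp (θ * (x i - m)) ≤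
        (1 - p) * Real.exp (-(p*(θ*c))) + p * Real.exp ((1-p)*(θ*c)) := by
      have e1 : ∀ i ∈ s, q i * Real.exp (θ * (x i - m)) =
          Real.exp (-(θ*m)) * (q i * Real.exp (θ * x i)) := by
        intro i hi
        rw [show θ * (x i - m) = θ * x i + -(θ*m) by ring, Real.exp_add]
        ring
      rw [Finset.sum_congr rfl e1, ← Finset.mul_sum]
      have e2 : ∑ i ∈ s, q i * Real.exp (θ * x i) ≤
          ∑ i ∈ s, q i * ((1 - x i / c) + x i / c * Real.exp (θ*c)) :=
        sum_le_sum fun i hi => mul_le_mul_of_nonneg_left (hconv i hi) (hq0 i hi)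
      have e3 : ∑ i ∈ s, q i * ((1 - x i / c) + x i / c * Real.exp (θ*c)) =
          (1 - p) + p * Real.exp (θ*c) := by
        have : ∀ i ∈ s, q i * ((1 - x i / c) + x i / c * Real.exp (θ*c)) =
            q i + (q i * x i) * ((Real.exp (θ*c) - 1)/c) := by
          intro i hi
          field_simp
          ring
        rw [Finset.sum_congr rfl this, Finset.sum_add_distrib, hq1, ← Finset.sum_mul, ← hm]
        rw [hp]
        field_simp
        ring
      have e4 : Real.exp (-(θ*m)) * (∑ i ∈ s, q i * Real.exp (θ * x i)) ≤
          Real.exp (-(θ*m)) * ((1 - p) + p * Real.exp (θ*c)) := by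
        apply mul_le_mul_of_nonneg_left (e2.trans_eq e3) (Real.exp_pos _).le
      refine e4.trans_eq ?_
      have hθm : θ * m = p * (θ * c) := by rw [hp]; field_simp
      rw [mul_add, hθm, show Real.exp (-(p*(θ*c))) * (p * Real.exp (θ*c)) =
        p * (Real.exp (-(p*(θ*c))) * Real.exp (θ*c)) by ring, ← Real.exp_add,
        show -(p*(θ*c)) + θ*c = (1-p)*(θ*c) by ring]
      ring
    refine key.trans ?_
    have := bernoulli_mgf p hp0 hp1 (θ*c)
    refine this.trans_eq ?_
    rw [show (θ*c)^2/8 = θ^2*c^2/8 by ring]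

lemma filt_mono {N : ℕ} (I : ℕ → Ω → Fin N) {a b : ℕ} (h : a ≤ b) :
    filt I a ≤ filt I b := by
  apply iSup₂_le
  intro j hj
  exact le_iSup₂ (f := fun j (_ : j ∈ Finset.Icc 1 b) => MeasurableSpace.comap (I j) ⊤) j
    (by simp only [Finset.mem_Icc] at hj ⊢; omega)

lemma filt_le {N : ℕ} [m0 : MeasurableSpace Ω] (I : ℕ → Ω → Fin N)
    (hI : ∀ t, Measurable (I t)) (t : ℕ) : filt I t ≤ m0 := by
  apply iSup₂_le
  intro j _
  intro S hS
  obtain ⟨S', -, rfl⟩ := hS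
  exact hI j (by trivial : MeasurableSet[⊤] S')

lemma measurable_I {N : ℕ} (I : ℕ → Ω → Fin N) {j t : ℕ} (h1 : 1 ≤ j) (h2 : j ≤ t) :
    Measurable[filt I t] (I j) := by
  have : Measurable[filt I t] (I j) ↔ MeasurableSpace.comap (I j) ⊤ ≤ filt I t :=
    measurable_iff_comap_le
  rw [this]
  exact le_iSup₂ (f := fun j (_ : j ∈ Finset.Icc 1 t) => MeasurableSpace.comap (I j) ⊤) j
    (by simp only [Finset.mem_Icc]; omega)

lemma comp_meas {N : ℕ} {m : MeasurableSpace Ω} (H : Ω → Fin N → ℝ)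
    (hH : ∀ i, Measurable[m] fun ω => H ω i) (J : Ω → Fin N) (hJ : Measurable[m] J) :
    Measurable[m] fun ω => H ω (J ω) := by
  have : (fun ω => H ω (J ω)) = fun ω => ∑ k : Fin N, if J ω = k then H ω k else 0 := by
    ext ω
    rw [Finset.sum_ite_eq Finset.univ (J ω) (fun k => H ω k)]
    simp
  rw [this]
  apply Finset.measurable_sum
  intro k _
  exact Measurable.ite (hJ (measurableSet_singleton k)) (hH k) measurable_const

lemma comp_meas_const {N : ℕ} {m : MeasurableSpace Ω} (g : Fin N → ℝ)
    (J : Ω → Fin N) (hJ : Measurable[m] J) : Measurable[m] fun ω => g (J ω) :=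
  comp_meas (fun _ i => g i) (fun _ => measurable_const) J hJ

lemma sum_Icc_split (g : ℕ → ℝ) (T : ℕ) (hT : 1 ≤ T) :
    ∑ i ∈ Finset.Icc 1 T, g i = (∑ i ∈ Finset.Icc 1 (T-1), g i) + g T := by
  cases T with
  | zero => omega
  | succ t => rw [Nat.succ_sub_one]; exact Finset.sum_Icc_succ_top (by omega) g

noncomputable def Mproc {N : ℕ} (π f : Fin N → ℝ) (q : ℕ → Ω → Fin N → ℝ)
    (I : ℕ → Ω → Fin N) (lam c : ℕ → Ω → ℝ) (mstar s : ℝ) (t : ℕ) (ω : Ω) : ℝ :=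
  Real.exp (s * (∑ i ∈ Finset.Icc 1 (min t N), lam i ω * (mhat π f q I i ω - mstar))
    - ∑ i ∈ Finset.Icc 1 (min t N), (lam i ω)^2 * (c i ω)^2/8)

noncomputable def Gker {N : ℕ} (π f : Fin N → ℝ) (q : ℕ → Ω → Fin N → ℝ)
    (I : ℕ → Ω → Fin N) (lam c : ℕ → Ω → ℝ) (mstar s : ℝ) (T : ℕ) (ω : Ω) (i : Fin N) : ℝ :=
  Real.exp (s * ((∑ j ∈ Finset.Icc 1 (T-1), lam j ω * (mhat π f q I j ω - mstar))
      + lam T ω * (π i / q T ω i * f i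
        + (∑ j ∈ Finset.Icc 1 (T-1), π (I j ω) * f (I j ω)) - mstar))
    - ∑ i ∈ Finset.Icc 1 T, (lam i ω)^2 * (c i ω)^2/8)

def filtn {N : ℕ} [m0 : MeasurableSpace Ω] (I : ℕ → Ω → Fin N)
    (hI : ∀ t, Measurable (I t)) (N' : ℕ) : Filtration ℕ m0 where
  seq := fun t => filt I (min t N')
  mono' := fun a b hab => filt_mono I (by omega : min a N' ≤ min b N')
  le' := fun t => filt_le I hI (min t N')

lemma side_bound
    [m0 : MeasurableSpace Ω] (μ : Measure Ω) [IsProbabilityMeasure μ]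
    {N : ℕ} (hN : 1 ≤ N)
    (π f : Fin N → ℝ)
    (hπ : ∀ i, π i ∈ Set.Ioc (0 : ℝ) 1) (hπsum : ∑ i, π i = 1)
    (hf : ∀ i, f i ∈ Set.Icc (0 : ℝ) 1)
    (I : ℕ → Ω → Fin N) (hI : ∀ t, Measurable (I t))
    (q : ℕ → Ω → Fin N → ℝ)
    (hq_meas : ∀ t, 1 ≤ t → t ≤ N → ∀ i,
      StronglyMeasurable[filt I (t - 1)] fun ω => q t ω i)
    (hq_pos : ∀ t ω, 1 ≤ t → t ≤ N → ∀ i ∈ remaining I t ω, 0 < q t ω i)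
    (hq_sum : ∀ t ω, 1 ≤ t → t ≤ N → ∑ i ∈ remaining I t ω, q t ω i = 1)
    (hWoR : ∀ t ω, 1 ≤ t → t ≤ N → I t ω ∈ remaining I t ω)
    (hcond : ∀ t, 1 ≤ t → t ≤ N → ∀ G : Ω → Fin N → ℝ,
      (∀ i, StronglyMeasurable[filt I (t - 1)] fun ω => G ω i) →
      μ[(fun ω => G ω (I t ω)) | filt I (t - 1)]
        =ᵐ[μ] fun ω => ∑ i ∈ remaining I t ω, q t ω i * G ω i)
    (mstar : ℝ) (hmstar : mstar = ∑ i, π i * f i)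
    (α : ℝ) (hα : α ∈ Set.Ioo (0 : ℝ) 1)
    (lam c : ℕ → Ω → ℝ)
    (hlam_meas : ∀ t, 1 ≤ t → t ≤ N → StronglyMeasurable[filt I (t - 1)] (lam t))
    (hlam_pos : ∀ t ω, 1 ≤ t → t ≤ N → 0 < lam t ω)
    (hc_meas : ∀ t, 1 ≤ t → t ≤ N → StronglyMeasurable[filt I (t - 1)] (c t))
    (hc : ∀ t, 1 ≤ t → t ≤ N →
      ∀ᵐ ω ∂μ, ∀ i ∈ remaining I t ω, π i / q t ω i ≤ c t ω)
    (s : ℝ) (hs : s = 1 ∨ s = -1) :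
    μ {ω | ∃ t, 1 ≤ t ∧ t ≤ N ∧ 2/α ≤ Real.exp
        (s * (∑ i ∈ Finset.Icc 1 t, lam i ω * (mhat π f q I i ω - mstar))
          - ∑ i ∈ Finset.Icc 1 t, (lam i ω)^2 * (c i ω)^2/8)}
      ≤ ENNReal.ofReal (α/2) := by
  have hs2 : s^2 = 1 := by rcases hs with h | h <;> rw [h] <;> norm_num
  let 𝒢 : Filtration ℕ m0 := filtn I hI N
  let M : ℕ → Ω → ℝ := Mproc π f q I lam c mstar s
  have hM : ∀ t ω, M t ω = Real.exp
      (s * (∑ i ∈ Finset.Icc 1 (min t N), lam i ω * (mhat π f q I i ω - mstar))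
        - ∑ i ∈ Finset.Icc 1 (min t N), (lam i ω)^2 * (c i ω)^2/8) := fun t ω => rfl
  have h𝒢 : ∀ t, (𝒢 t : MeasurableSpace Ω) = filt I (min t N) := fun t => rfl
  have hMpos : ∀ t ω, 0 < M t ω := fun t ω => Real.exp_pos _
  have hM0 : ∀ ω, M 0 ω = 1 := by
    intro ω
    rw [hM]
    norm_num
  -- measurability helpers
  have hlam_meas' : ∀ i t, 1 ≤ i → i ≤ N → i - 1 ≤ t → Measurable[filt I t] (lam i) :=
    fun i t h1 h2 h3 => ((hlam_meas i h1 h2).measurable).mono (filt_mono I h3) le_rfl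
  have hc_meas' : ∀ i t, 1 ≤ i → i ≤ N → i - 1 ≤ t → Measurable[filt I t] (c i) :=
    fun i t h1 h2 h3 => ((hc_meas i h1 h2).measurable).mono (filt_mono I h3) le_rfl
  have hq_meas' : ∀ i t, 1 ≤ i → i ≤ N → i - 1 ≤ t → ∀ k,
      Measurable[filt I t] fun ω => q i ω k :=
    fun i t h1 h2 h3 k => ((hq_meas i h1 h2 k).measurable).mono (filt_mono I h3) le_rfl
  have hmhat_meas : ∀ i t, 1 ≤ i → i ≤ N → i ≤ t → Measurable[filt I t] (mhat π f q I i) := by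
    intro i t h1 h2 h3
    have hIi : Measurable[filt I t] (I i) := measurable_I I h1 h3
    apply Measurable.add
    · exact ((comp_meas_const π (I i) hIi).div
        (comp_meas (q i) (hq_meas' i t h1 h2 (by omega)) (I i) hIi)).mul
        (comp_meas_const f (I i) hIi)
    · apply Finset.measurable_sum
      intro j hj
      simp only [Finset.mem_Icc] at hj
      have hIj : Measurable[filt I t] (I j) := measurable_I I hj.1 (by omega)
      exact (comp_meas_const π (I j) hIj).mul (comp_meas_const f (I j) hIj)
  have hS_meas : ∀ T t, T ≤ N → T ≤ t → Measurable[filt I t] (fun ω =>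
      s * (∑ i ∈ Finset.Icc 1 T, lam i ω * (mhat π f q I i ω - mstar))
        - ∑ i ∈ Finset.Icc 1 T, (lam i ω)^2 * (c i ω)^2/8) := by
    intro T t hTN hTt
    apply Measurable.sub
    · apply Measurable.const_mul
      apply Finset.measurable_sum
      intro j hj
      simp only [Finset.mem_Icc] at hj
      exact (hlam_meas' j t hj.1 (by omega) (by omega)).mul
        ((hmhat_meas j t hj.1 (by omega) (by omega)).sub measurable_const)
    · apply Finset.measurable_sum
      intro j hj
      simp only [Finset.mem_Icc] at hj
      exact (((hlam_meas' j t hj.1 (by omega) (by omega)).pow measurable_const).mul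
        ((hc_meas' j t hj.1 (by omega) (by omega)).pow measurable_const)).div measurable_const
  have hadapted : StronglyAdapted 𝒢 M := by
    intro t
    exact (Real.measurable_exp.comp
      (hS_meas (min t N) (min t N) (by omega) le_rfl)).stronglyMeasurable
  -- the conditional kernel function G
  let G : ℕ → Ω → Fin N → ℝ := Gker π f q I lam c mstar s
  have hG : ∀ T ω i, G T ω i = Real.exp
      (s * ((∑ j ∈ Finset.Icc 1 (T-1), lam j ω * (mhat π f q I j ω - mstar))
          + lam T ω * (π i / q T ω i * f i
            + (∑ j ∈ Finset.Icc 1 (T-1), π (I j ω) * f (I j ω)) - mstar))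
        - ∑ i ∈ Finset.Icc 1 T, (lam i ω)^2 * (c i ω)^2/8) := fun T ω i => rfl
  have hGpos : ∀ T ω i, 0 < G T ω i := fun T ω i => Real.exp_pos _
  have hMeqG : ∀ T, 1 ≤ T → T ≤ N → M T = fun ω => G T ω (I T ω) := by
    intro T h1 h2
    funext ω
    rw [hM, hG, min_eq_left h2,
      sum_Icc_split (fun i => lam i ω * (mhat π f q I i ω - mstar)) T h1]
    simp only [mhat]
  have hGmeas : ∀ T, 1 ≤ T → T ≤ N → ∀ i,
      StronglyMeasurable[filt I (T-1)] fun ω => G T ω i := by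
    intro T h1 h2 i
    apply Measurable.stronglyMeasurable
    apply Real.measurable_exp.comp
    apply Measurable.sub
    · apply Measurable.const_mul
      apply Measurable.add
      · apply Finset.measurable_sum
        intro j hj
        simp only [Finset.mem_Icc] at hj
        exact (hlam_meas' j (T-1) hj.1 (by omega) (by omega)).mul
          ((hmhat_meas j (T-1) hj.1 (by omega) hj.2).sub measurable_const)
      · apply Measurable.mul (hlam_meas' T (T-1) h1 h2 le_rfl)
        apply Measurable.sub _ measurable_const
        apply Measurable.add
        · exact (Measurable.div measurable_const (hq_meas' T (T-1) h1 h2 le_rfl i)).mul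
            measurable_const
        · apply Finset.measurable_sum
          intro j hj
          simp only [Finset.mem_Icc] at hj
          have hIj : Measurable[filt I (T-1)] (I j) := measurable_I I hj.1 hj.2
          exact (comp_meas_const π (I j) hIj).mul (comp_meas_const f (I j) hIj)
    · apply Finset.measurable_sum
      intro j hj
      simp only [Finset.mem_Icc] at hj
      exact (((hlam_meas' j (T-1) hj.1 (by omega) (by omega)).pow measurable_const).mul
        ((hc_meas' j (T-1) hj.1 (by omega) (by omega)).pow measurable_const)).div
        measurable_const
  -- integrability
  have hGint : ∀ T, 1 ≤ T → T ≤ N → Integrable (fun ω => G T ω (I T ω)) μ := by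
    intro T h1 h2
    by_contra hni
    have h0 := hcond T h1 h2 (G T) (hGmeas T h1 h2)
    rw [condExp_of_not_integrable hni] at h0
    have hpos : ∀ ω, (0:ℝ) < ∑ i ∈ remaining I T ω, q T ω i * G T ω i := fun ω =>
      Finset.sum_pos (fun i hi => mul_pos (hq_pos T ω h1 h2 i hi) (hGpos T ω i))
        ⟨I T ω, hWoR T ω h1 h2⟩
    have hne : μ ≠ 0 := IsProbabilityMeasure.ne_zero μ
    haveI : (MeasureTheory.ae μ).NeBot := ae_neBot.2 hne
    obtain ⟨ω, hω⟩ := h0.exists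
    simp only [Pi.zero_apply] at hω
    exact (hpos ω).ne' hω.symm
  have hMint : ∀ t, Integrable (M t) μ := by
    intro t
    rcases Nat.eq_zero_or_pos t with h | h
    · subst h
      have : M 0 = fun _ => 1 := funext hM0
      rw [this]
      exact integrable_const 1
    · have hTN : 1 ≤ min t N := by omega
      have hMt : M t = M (min t N) := by
        funext ω
        rw [hM, hM]
        simp only [min_assoc, min_self]
      rw [hMt, hMeqG (min t N) hTN (by omega)]
      exact hGint (min t N) hTN (by omega)
  -- injectivity of the sample path
  have hinj : ∀ (ω : Ω) (T : ℕ), T ≤ N → ∀ j ∈ Finset.Icc 1 (T-1), ∀ k ∈ Finset.Icc 1 (T-1),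
      I j ω = I k ω → j = k := by
    intro ω T hT
    have key : ∀ j k, 1 ≤ j → j < k → k ≤ N → I j ω ≠ I k ω := by
      intro j k h1 h2 h3 he
      have hk : I k ω ∈ remaining I k ω := hWoR k ω (by omega) h3
      rw [remaining] at hk
      simp only [Finset.mem_sdiff, Finset.mem_univ, true_and, Finset.mem_image] at hk
      exact hk ⟨j, by simp only [Finset.mem_Icc]; omega, he⟩
    intro j hj k hk he
    simp only [Finset.mem_Icc] at hj hk
    by_contra hne
    rcases Nat.lt_or_ge j k with h | h
    · exact key j k hj.1 h (by omega) he
    · exact key k j hk.1 (by omega) (by omega) he.symm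
  -- the conditional mean
  have hmean : ∀ T ω, 1 ≤ T → T ≤ N →
      ∑ i ∈ remaining I T ω, q T ω i * (π i / q T ω i * f i)
        = mstar - ∑ j ∈ Finset.Icc 1 (T-1), π (I j ω) * f (I j ω) := by
    intro T ω h1 h2
    have e1 : ∑ i ∈ remaining I T ω, q T ω i * (π i / q T ω i * f i)
        = ∑ i ∈ remaining I T ω, π i * f i := by
      refine Finset.sum_congr rfl fun i hi => ?_
      have hne : q T ω i ≠ 0 := (hq_pos T ω h1 h2 i hi).ne'
      field_simp
    rw [e1, remaining, Finset.sum_sdiff_eq_sub (Finset.subset_univ _), hmstar]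
    congr 1
    exact Finset.sum_image fun j hj k hk he => hinj ω T h2 j hj k hk he
  have hcondexp_le : ∀ t, μ[M (t+1) | 𝒢 t] ≤ᵐ[μ] M t := by
    intro t
    by_cases ht : t + 1 ≤ N
    · have h1T : 1 ≤ t + 1 := by omega
      have hMe : M (t+1) = fun ω => G (t+1) ω (I (t+1) ω) := hMeqG (t+1) h1T ht
      have h0 := hcond (t+1) h1T ht (G (t+1)) (hGmeas (t+1) h1T ht)
      rw [← hMe] at h0
      have hGt : (𝒢 t : MeasurableSpace Ω) = filt I ((t+1) - 1) := by
        rw [h𝒢 t]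
        congr 1
        omega
      rw [show μ[M (t+1) | (𝒢 t : MeasurableSpace Ω)]
            = μ[M (t+1) | filt I ((t+1) - 1)] from by rw [hGt]]
      refine h0.le.trans ?_
      filter_upwards [hc (t+1) h1T ht] with ω hcω
      -- pointwise key inequality
      have hmt : min t N = t := min_eq_left (by omega)
      have htt : (t+1) - 1 = t := by omega
      set x : Fin N → ℝ := fun i => π i / q (t+1) ω i * f i with hx
      set mm : ℝ := ∑ i ∈ remaining I (t+1) ω, q (t+1) ω i * x i with hmm
      have hmm' : mm = mstar - ∑ j ∈ Finset.Icc 1 t, π (I j ω) * f (I j ω) := by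
        rw [hmm]
        have := hmean (t+1) ω h1T ht
        rw [htt] at this
        exact this
      set v : ℝ := (lam (t+1) ω)^2 * (c (t+1) ω)^2 / 8 with hv
      have hterm : ∀ i, G (t+1) ω i
          = M t ω * Real.exp (-v) * Real.exp ((s * lam (t+1) ω) * (x i - mm)) := by
        intro i
        rw [hG, hM, hmt, htt, ← Real.exp_add, ← Real.exp_add]
        congr 1
        rw [sum_Icc_split (fun i => (lam i ω)^2 * (c i ω)^2/8) (t+1) h1T, htt, hmm', hv, hx]
        ring
      have hsum_eq : ∑ i ∈ remaining I (t+1) ω, q (t+1) ω i * G (t+1) ω i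
          = M t ω * Real.exp (-v) *
            ∑ i ∈ remaining I (t+1) ω, q (t+1) ω i
              * Real.exp ((s * lam (t+1) ω) * (x i - mm)) := by
        rw [Finset.mul_sum]
        refine Finset.sum_congr rfl fun i _ => ?_
        rw [hterm i]
        ring
      have hhoef : ∑ i ∈ remaining I (t+1) ω, q (t+1) ω i
            * Real.exp ((s * lam (t+1) ω) * (x i - mm))
          ≤ Real.exp ((s * lam (t+1) ω)^2 * (c (t+1) ω)^2 / 8) := by
        refine hoef_discrete (remaining I (t+1) ω) (q (t+1) ω) x
          (fun i hi => (hq_pos (t+1) ω h1T ht i hi).le) (hq_sum (t+1) ω h1T ht)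
          (c (t+1) ω) (s * lam (t+1) ω) ?_ ?_
        · intro i hi
          exact mul_nonneg (div_nonneg (hπ i).1.le (hq_pos (t+1) ω h1T ht i hi).le) (hf i).1
        · intro i hi
          calc π i / q (t+1) ω i * f i ≤ π i / q (t+1) ω i * 1 :=
                mul_le_mul_of_nonneg_left (hf i).2
                  (div_nonneg (hπ i).1.le (hq_pos (t+1) ω h1T ht i hi).le)
            _ = π i / q (t+1) ω i := mul_one _
            _ ≤ c (t+1) ω := hcω i hi
      have hsq : (s * lam (t+1) ω)^2 = (lam (t+1) ω)^2 := by
        rw [mul_pow, hs2, one_mul]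
      calc ∑ i ∈ remaining I (t+1) ω, q (t+1) ω i * G (t+1) ω i
          = M t ω * Real.exp (-v) * ∑ i ∈ remaining I (t+1) ω, q (t+1) ω i
              * Real.exp ((s * lam (t+1) ω) * (x i - mm)) := hsum_eq
        _ ≤ M t ω * Real.exp (-v) * Real.exp ((s * lam (t+1) ω)^2 * (c (t+1) ω)^2 / 8) := by
            apply mul_le_mul_of_nonneg_left hhoef
            exact mul_nonneg (hMpos t ω).le (Real.exp_pos _).le
        _ = M t ω := by
            rw [hsq, ← hv, mul_assoc, ← Real.exp_add, neg_add_cancel, Real.exp_zero, mul_one]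
    · have hMeq : M (t+1) = M t := by
        funext ω
        rw [hM, hM]
        rw [min_eq_right (by omega : N ≤ t + 1), min_eq_right (by omega : N ≤ t)]
      rw [hMeq, condExp_of_stronglyMeasurable (𝒢.le t) (hadapted t) (hMint t)]
  have hsuper : Supermartingale M 𝒢 μ := supermartingale_nat hadapted hMint hcondexp_le
  -- Ville / optional stopping
  have hε : (0:ℝ) < 2/α := div_pos two_pos hα.1
  -- identify the event with the supermartingale event
  have hMev : ∀ t ω, 1 ≤ t → t ≤ N → M t ω = Real.exp
      (s * (∑ i ∈ Finset.Icc 1 t, lam i ω * (mhat π f q I i ω - mstar))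
        - ∑ i ∈ Finset.Icc 1 t, (lam i ω)^2 * (c i ω)^2/8) := by
    intro t ω h1 h2
    rw [hM, min_eq_left h2]
  have hseteq : {ω | ∃ t, 1 ≤ t ∧ t ≤ N ∧ 2/α ≤ Real.exp
        (s * (∑ i ∈ Finset.Icc 1 t, lam i ω * (mhat π f q I i ω - mstar))
          - ∑ i ∈ Finset.Icc 1 t, (lam i ω)^2 * (c i ω)^2/8)}
      = {ω | ∃ t, 1 ≤ t ∧ t ≤ N ∧ 2/α ≤ M t ω} := by
    ext ω
    simp only [Set.mem_setOf_eq]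
    constructor
    · rintro ⟨t, h1, h2, h3⟩
      exact ⟨t, h1, h2, by rw [hMev t ω h1 h2]; exact h3⟩
    · rintro ⟨t, h1, h2, h3⟩
      exact ⟨t, h1, h2, by rw [← hMev t ω h1 h2]; exact h3⟩
  rw [hseteq]
  set B : Set Ω := {ω | ∃ t, 1 ≤ t ∧ t ≤ N ∧ 2/α ≤ M t ω} with hB
  have hMmeas : ∀ t, Measurable (M t) :=
    fun t => ((hadapted t).measurable).mono (𝒢.le t) le_rfl
  have hBmeas : MeasurableSet B := by
    have : B = ⋃ t ∈ Set.Icc 1 N, {ω | 2/α ≤ M t ω} := by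
      ext ω
      simp only [hB, Set.mem_setOf_eq, Set.mem_iUnion, Set.mem_Icc, exists_prop]
      constructor
      · rintro ⟨t, h1, h2, h3⟩; exact ⟨t, ⟨h1, h2⟩, h3⟩
      · rintro ⟨t, ⟨h1, h2⟩, h3⟩; exact ⟨t, h1, h2, h3⟩
    rw [this]
    exact MeasurableSet.biUnion (Set.to_countable _)
      (fun t _ => measurableSet_le measurable_const (hMmeas t))
  -- stopping time
  have hτ : IsStoppingTime 𝒢 (fun ω ↦ ((hittingBtwn M (Set.Ici (2/α)) 1 N ω : ℕ) : WithTop ℕ)) :=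
    hadapted.adapted.isStoppingTime_hittingBtwn measurableSet_Ici
  have hτle : ∀ ω, ((hittingBtwn M (Set.Ici (2/α)) 1 N ω : ℕ) : WithTop ℕ) ≤ N :=
    fun ω => WithTop.coe_le_coe.2 (hittingBtwn_le ω)
  set SV : Ω → ℝ := stoppedValue M (fun ω ↦ ((hittingBtwn M (Set.Ici (2/α)) 1 N ω : ℕ) : WithTop ℕ)) with hSV
  have hsub : Submartingale (-M) 𝒢 μ := hsuper.neg
  haveI : SigmaFiniteFiltration μ 𝒢 := ⟨fun i => inferInstance⟩
  have hSVint : Integrable SV μ := by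
    have h1 := (hsub.integrable_stoppedValue hτ hτle).neg
    have : (-stoppedValue (-M) (fun ω ↦ ((hittingBtwn M (Set.Ici (2/α)) 1 N ω : ℕ) : WithTop ℕ))) = SV := by
      funext ω
      simp [hSV, stoppedValue]
    rwa [this] at h1
  have hSVnonneg : ∀ ω, 0 ≤ SV ω := fun ω => (hMpos _ ω).le
  have hSVval : ∀ ω ∈ B, 2/α ≤ SV ω := by
    intro ω hω
    obtain ⟨t, h1, h2, h3⟩ := hω
    exact stoppedValue_hittingBtwn_mem ⟨t, Set.mem_Icc.2 ⟨h1, h2⟩, h3⟩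
  have hstep1 : (2/α) * (μ B).toReal ≤ ∫ ω in B, SV ω ∂μ :=
    by
      have h := setIntegral_ge_of_const_le hBmeas (measure_ne_top μ B) hSVval hSVint.integrableOn
      rw [smul_eq_mul, measureReal_def, mul_comm] at h
      exact h
  have hstep2 : ∫ ω in B, SV ω ∂μ ≤ ∫ ω, SV ω ∂μ :=
    setIntegral_le_integral hSVint (Filter.Eventually.of_forall hSVnonneg)
  have hstep3 : ∫ ω, SV ω ∂μ ≤ 1 := by
    have hmono := hsub.expected_stoppedValue_mono (isStoppingTime_const 𝒢 0) hτ
      (fun ω => WithTop.coe_le_coe.2 (Nat.zero_le _)) hτle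
    have e0 : stoppedValue (-M) (fun _ => WithTop.some (0:ℕ)) = fun ω => -(M 0 ω) := rfl
    have e1 : stoppedValue (-M) (fun ω ↦ ((hittingBtwn M (Set.Ici (2/α)) 1 N ω : ℕ) : WithTop ℕ)) = fun ω => -(SV ω) := rfl
    rw [e0, e1, integral_neg, integral_neg] at hmono
    have hM0int : ∫ ω, M 0 ω ∂μ = 1 := by
      have : (fun ω => M 0 ω) = fun _ => (1:ℝ) := funext hM0
      rw [this, integral_const, probReal_univ]
      simp
    rw [hM0int] at hmono
    linarith
  have htoReal : (μ B).toReal ≤ α/2 := by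
    have h := hstep1.trans (hstep2.trans hstep3)
    have hα0 := hα.1
    calc (μ B).toReal = ((2/α) * (μ B).toReal) * (α/2) := by
          field_simp
      _ ≤ 1 * (α/2) := by
          apply mul_le_mul_of_nonneg_right h
          positivity
      _ = α/2 := one_mul _
  calc μ B = ENNReal.ofReal ((μ B).toReal) := (ENNReal.ofReal_toReal (measure_ne_top μ B)).symm
    _ ≤ ENNReal.ofReal (α/2) := ENNReal.ofReal_le_ofReal htoReal


/-- **Hoeffding confidence sequence.** Let `α ∈ (0,1)`, let `(λ_t)` be a
predictable sequence with `λ_t > 0`, and let `(c_t)` be a predictable sequence with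
`c_t ≥ max_{i∈N_t} π(i)/q_t(i)` almost surely. Then with
`C_t^H = (μ̂_t(λ_1^t) ± (log(2/α) + Σ_{i=1}^t λ_i² c_i²/8)/(Σ_{i=1}^t λ_i)) ∩ [0,1]` one has
`P(∃ t ∈ {1,…,N} : m* ∉ C_t^H) ≤ α`. -/
theorem statement14
    [m0 : MeasurableSpace Ω] (μ : Measure Ω) [IsProbabilityMeasure μ]
    {N : ℕ} (hN : 1 ≤ N)
    (π f : Fin N → ℝ)
    (hπ : ∀ i, π i ∈ Set.Ioc (0 : ℝ) 1) (hπsum : ∑ i, π i = 1)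
    (hf : ∀ i, f i ∈ Set.Icc (0 : ℝ) 1)
    (I : ℕ → Ω → Fin N) (hI : ∀ t, Measurable (I t))
    (q : ℕ → Ω → Fin N → ℝ)
    (hq_meas : ∀ t, 1 ≤ t → t ≤ N → ∀ i,
      StronglyMeasurable[filt I (t - 1)] fun ω => q t ω i)
    (hq_pos : ∀ t ω, 1 ≤ t → t ≤ N → ∀ i ∈ remaining I t ω, 0 < q t ω i)
    (hq_sum : ∀ t ω, 1 ≤ t → t ≤ N → ∑ i ∈ remaining I t ω, q t ω i = 1)
    (hWoR : ∀ t ω, 1 ≤ t → t ≤ N → I t ω ∈ remaining I t ω)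
    (hcond : ∀ t, 1 ≤ t → t ≤ N → ∀ G : Ω → Fin N → ℝ,
      (∀ i, StronglyMeasurable[filt I (t - 1)] fun ω => G ω i) →
      μ[(fun ω => G ω (I t ω)) | filt I (t - 1)]
        =ᵐ[μ] fun ω => ∑ i ∈ remaining I t ω, q t ω i * G ω i)
    (mstar : ℝ) (hmstar : mstar = ∑ i, π i * f i)
    (α : ℝ) (hα : α ∈ Set.Ioo (0 : ℝ) 1)
    (lam c : ℕ → Ω → ℝ)
    (hlam_meas : ∀ t, 1 ≤ t → t ≤ N → StronglyMeasurable[filt I (t - 1)] (lam t))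
    (hlam_pos : ∀ t ω, 1 ≤ t → t ≤ N → 0 < lam t ω)
    (hc_meas : ∀ t, 1 ≤ t → t ≤ N → StronglyMeasurable[filt I (t - 1)] (c t))
    (hc : ∀ t, 1 ≤ t → t ≤ N →
      ∀ᵐ ω ∂μ, ∀ i ∈ remaining I t ω, π i / q t ω i ≤ c t ω) :
    μ {ω | ∃ t, 1 ≤ t ∧ t ≤ N ∧
        mstar ∉ Set.Icc (hoefCenter π f q I lam t ω - hoefRadius α lam c t ω)
            (hoefCenter π f q I lam t ω + hoefRadius α lam c t ω) ∩ Set.Icc (0 : ℝ) 1}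
      ≤ ENNReal.ofReal α := by
  have hε : (0:ℝ) < 2/α := div_pos two_pos hα.1
  have hm01 : mstar ∈ Set.Icc (0:ℝ) 1 := by
    constructor
    · rw [hmstar]
      exact Finset.sum_nonneg fun i _ => mul_nonneg (hπ i).1.le (hf i).1
    · rw [hmstar, ← hπsum]
      exact Finset.sum_le_sum fun i _ => mul_le_of_le_one_right (hπ i).1.le (hf i).2
  have hside : ∀ s, s = 1 ∨ s = -1 → μ {ω | ∃ t, 1 ≤ t ∧ t ≤ N ∧ 2/α ≤ Real.exp
        (s * (∑ i ∈ Finset.Icc 1 t, lam i ω * (mhat π f q I i ω - mstar))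
          - ∑ i ∈ Finset.Icc 1 t, (lam i ω)^2 * (c i ω)^2/8)}
      ≤ ENNReal.ofReal (α/2) := fun s hs =>
    side_bound μ hN π f hπ hπsum hf I hI q hq_meas hq_pos hq_sum hWoR hcond mstar hmstar
      α hα lam c hlam_meas hlam_pos hc_meas hc s hs
  have hincl : {ω | ∃ t, 1 ≤ t ∧ t ≤ N ∧
        mstar ∉ Set.Icc (hoefCenter π f q I lam t ω - hoefRadius α lam c t ω)
            (hoefCenter π f q I lam t ω + hoefRadius α lam c t ω) ∩ Set.Icc (0 : ℝ) 1}
      ⊆ {ω | ∃ t, 1 ≤ t ∧ t ≤ N ∧ 2/α ≤ Real.exp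
          ((1:ℝ) * (∑ i ∈ Finset.Icc 1 t, lam i ω * (mhat π f q I i ω - mstar))
            - ∑ i ∈ Finset.Icc 1 t, (lam i ω)^2 * (c i ω)^2/8)}
        ∪ {ω | ∃ t, 1 ≤ t ∧ t ≤ N ∧ 2/α ≤ Real.exp
          ((-1:ℝ) * (∑ i ∈ Finset.Icc 1 t, lam i ω * (mhat π f q I i ω - mstar))
            - ∑ i ∈ Finset.Icc 1 t, (lam i ω)^2 * (c i ω)^2/8)} := by
    intro ω hω
    obtain ⟨t, h1, h2, h3⟩ := hω
    have hnot : mstar ∉ Set.Icc (hoefCenter π f q I lam t ω - hoefRadius α lam c t ω)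
        (hoefCenter π f q I lam t ω + hoefRadius α lam c t ω) := fun hmem => h3 ⟨hmem, hm01⟩
    rw [Set.mem_Icc, not_and_or] at hnot
    set L : ℝ := ∑ i ∈ Finset.Icc 1 t, lam i ω with hLdef
    have hL : 0 < L :=
      Finset.sum_pos (fun i hi => by
          simp only [Finset.mem_Icc] at hi
          exact hlam_pos i ω hi.1 (le_trans hi.2 h2))
        ⟨1, Finset.mem_Icc.2 ⟨le_rfl, h1⟩⟩
    set A : ℝ := ∑ i ∈ Finset.Icc 1 t, lam i ω * mhat π f q I i ω with hAdef
    set V : ℝ := ∑ i ∈ Finset.Icc 1 t, (lam i ω)^2 * (c i ω)^2/8 with hVdef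
    have hScalc : ∑ i ∈ Finset.Icc 1 t, lam i ω * (mhat π f q I i ω - mstar)
        = A - mstar * L := by
      rw [hAdef, hLdef, Finset.mul_sum]
      rw [← Finset.sum_sub_distrib]
      refine Finset.sum_congr rfl fun i _ => ?_
      ring
    have hCR : hoefCenter π f q I lam t ω = A / L ∧
        hoefRadius α lam c t ω = (Real.log (2/α) + V) / L := ⟨rfl, rfl⟩
    rcases hnot with hlt | hlt
    · left
      refine ⟨t, h1, h2, ?_⟩
      rw [not_le] at hlt
      rw [hCR.1, hCR.2, ← sub_div, lt_div_iff₀ hL] at hlt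
      have hexp : Real.log (2/α) < (1:ℝ) * (A - mstar * L) - V := by nlinarith
      rw [← hScalc] at hexp
      calc 2/α = Real.exp (Real.log (2/α)) := (Real.exp_log hε).symm
        _ ≤ _ := (Real.exp_le_exp.2 hexp.le)
    · right
      refine ⟨t, h1, h2, ?_⟩
      rw [not_le] at hlt
      rw [hCR.1, hCR.2, ← add_div, div_lt_iff₀ hL] at hlt
      have hexp : Real.log (2/α) < (-1:ℝ) * (A - mstar * L) - V := by nlinarith
      rw [← hScalc] at hexp
      calc 2/α = Real.exp (Real.log (2/α)) := (Real.exp_log hε).symm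
        _ ≤ _ := (Real.exp_le_exp.2 hexp.le)
  calc μ _ ≤ μ (_ ∪ _) := measure_mono hincl
    _ ≤ _ + _ := measure_union_le _ _
    _ ≤ ENNReal.ofReal (α/2) + ENNReal.ofReal (α/2) :=
        add_le_add (hside 1 (Or.inl rfl)) (hside (-1) (Or.inr rfl))
    _ = ENNReal.ofReal α := by
        rw [← ENNReal.ofReal_add (by linarith [hα.1] : (0:ℝ) ≤ α/2) (by linarith [hα.1] : (0:ℝ) ≤ α/2)]
        norm_num


end RLFA
end

section
/- (Empirical-Bernstein increment inequality, equation (C.1).) Let X ≥ 0 be an integrable random variable with mean μ = E[X], let a > 0 and λ ∈ [0, 1/a), and set ψ_E^a(λ) = (−log(1 − aλ) − aλ)/a². Then E[exp(λ(X − μ) − (X − a)² ψ_E^a(λ))] ≤ 1. -/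
open Real

lemma keyA (y : ℝ) (hy : -1 ≤ y) (l : ℝ) (hl0 : 0 ≤ l) (hl1 : l < 1) :
    l * y - (-Real.log (1 - l) - l) * y ^ 2 ≤ Real.log (1 + l * y) := by
  set G : ℝ → ℝ := fun t => Real.log (1 + t * y) - t * y + (-Real.log (1 - t) - t) * y ^ 2 with hG
  have hpos : ∀ t ∈ Set.Icc (0:ℝ) l, 0 < 1 - t ∧ 0 < 1 + t * y := by
    rintro t ⟨ht0, htl⟩
    constructor
    · linarith
    · nlinarith
  have hderiv : ∀ t ∈ Set.Icc (0:ℝ) l,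
      HasDerivAt G (y / (1 + t * y) - y + (-(-1 / (1 - t)) - 1) * y ^ 2) t := by
    intro t ht
    obtain ⟨h1, h2⟩ := hpos t ht
    have d1 : HasDerivAt (fun t : ℝ => 1 + t * y) y t := by
      simpa using ((hasDerivAt_id t).mul_const y).const_add 1
    have d2 : HasDerivAt (fun t : ℝ => Real.log (1 + t * y)) (y / (1 + t * y)) t := by
      simpa [div_eq_mul_inv] using d1.log (ne_of_gt h2)
    have d3 : HasDerivAt (fun t : ℝ => 1 - t) (-1) t := by
      simpa using (hasDerivAt_id t).const_sub 1
    have d4 : HasDerivAt (fun t : ℝ => -Real.log (1 - t) - t)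
        (-(-1 / (1 - t)) - 1) t := by
      have := (d3.log (ne_of_gt h1)).fun_neg
      simpa using this.fun_sub (hasDerivAt_id' t)
    have d5 : HasDerivAt (fun t : ℝ => t * y) y t := by
      simpa using (hasDerivAt_id t).mul_const y
    exact (d2.sub d5).add (d4.mul_const (y ^ 2))
  have hmono : MonotoneOn G (Set.Icc 0 l) := by
    apply monotoneOn_of_deriv_nonneg (convex_Icc 0 l)
    · intro t ht
      exact ((hderiv t ht).continuousAt).continuousWithinAt
    · intro t ht
      rw [interior_Icc] at ht
      have ht' : t ∈ Set.Icc (0:ℝ) l := ⟨le_of_lt ht.1, le_of_lt ht.2⟩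
      exact ((hderiv t ht').differentiableAt).differentiableWithinAt
    · intro t ht
      rw [interior_Icc] at ht
      have ht' : t ∈ Set.Icc (0:ℝ) l := ⟨le_of_lt ht.1, le_of_lt ht.2⟩
      obtain ⟨h1, h2⟩ := hpos t ht'
      rw [(hderiv t ht').deriv]
      have heq : y / (1 + t * y) - y + (-(-1 / (1 - t)) - 1) * y ^ 2
          = t ^ 2 * y ^ 2 * (y + 1) / ((1 - t) * (1 + t * y)) := by
        rw [eq_div_iff (mul_ne_zero h1.ne' h2.ne'), div_eq_mul_inv, div_eq_mul_inv]
        linear_combination (y * (1 - t)) * mul_inv_cancel₀ h2.ne' + (y ^ 2 * (1 + t * y)) * mul_inv_cancel₀ h1.ne'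
      rw [heq]
      have : (0:ℝ) ≤ y + 1 := by linarith
      positivity
  have hG0 : G 0 = 0 := by simp [hG]
  have := hmono (Set.left_mem_Icc.2 hl0) (Set.right_mem_Icc.2 hl0) hl0
  rw [hG0] at this
  simp only [hG] at this
  linarith

lemma keyB (y : ℝ) (hy : -1 ≤ y) (l : ℝ) (hl0 : 0 ≤ l) (hl1 : l < 1) :
    Real.exp (l * y - (-Real.log (1 - l) - l) * y ^ 2) ≤ 1 + l * y := by
  have h2 : (0:ℝ) < 1 + l * y := by nlinarith
  calc Real.exp (l * y - (-Real.log (1 - l) - l) * y ^ 2)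
      ≤ Real.exp (Real.log (1 + l * y)) :=
        Real.exp_le_exp.2 (keyA y hy l hl0 hl1)
    _ = 1 + l * y := Real.exp_log h2
open MeasureTheory

namespace RLFA

/-- **Empirical-Bernstein increment inequality, equation (C.1).**
Let `X ≥ 0` be an integrable random variable with mean `μ = E[X]`, let `a > 0` and
`λ ∈ [0, 1/a)`, and set `ψ_E^a(λ) = (−log(1 − aλ) − aλ)/a²`. Then
`E[exp(λ(X − μ) − (X − a)² ψ_E^a(λ))] ≤ 1`. -/
theorem statement16
    {Ω : Type*} [MeasurableSpace Ω] (μ : Measure Ω) [IsProbabilityMeasure μ]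
    (X : Ω → ℝ) (hX : Integrable X μ) (hX0 : ∀ᵐ ω ∂μ, 0 ≤ X ω)
    (a lam : ℝ) (ha : 0 < a) (hlam0 : 0 ≤ lam) (hlam1 : lam < 1 / a) :
    ∫ ω, Real.exp (lam * (X ω - ∫ x, X x ∂μ) -
        (X ω - a) ^ 2 * ((-Real.log (1 - a * lam) - a * lam) / a ^ 2)) ∂μ ≤ 1 := by
  set m := ∫ x, X x ∂μ with hm
  set l := a * lam with hl
  have hl0 : 0 ≤ l := mul_nonneg ha.le hlam0
  have hl1 : l < 1 := by
    rw [hl]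
    calc a * lam < a * (1 / a) := by exact mul_lt_mul_of_pos_left hlam1 ha
      _ = 1 := by field_simp
  set g : Ω → ℝ := fun ω => Real.exp (lam * (a - m)) * (1 + lam * (X ω - a)) with hg
  have hgint : Integrable g μ := by
    apply Integrable.const_mul
    exact (integrable_const (1:ℝ)).add (((hX.sub (integrable_const a)).const_mul lam))
  have hptwise : ∀ᵐ ω ∂μ, Real.exp (lam * (X ω - m) -
      (X ω - a) ^ 2 * ((-Real.log (1 - a * lam) - a * lam) / a ^ 2)) ≤ g ω := by
    filter_upwards [hX0] with ω hω
    have hy : (-1 : ℝ) ≤ (X ω - a) / a := by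
      rw [le_div_iff₀ ha]
      linarith
    have hkey := keyB ((X ω - a) / a) hy l hl0 hl1
    have e1 : l * ((X ω - a) / a) = lam * (X ω - a) := by
      rw [hl]; field_simp
    have e2 : (-Real.log (1 - l) - l) * ((X ω - a) / a) ^ 2
        = (X ω - a) ^ 2 * ((-Real.log (1 - a * lam) - a * lam) / a ^ 2) := by
      rw [hl]; field_simp
    rw [e1, e2] at hkey
    have : lam * (X ω - m) - (X ω - a) ^ 2 * ((-Real.log (1 - a * lam) - a * lam) / a ^ 2)
        = lam * (a - m) + (lam * (X ω - a)
          - (X ω - a) ^ 2 * ((-Real.log (1 - a * lam) - a * lam) / a ^ 2)) := by ring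
    rw [this, Real.exp_add, hg]
    exact mul_le_mul_of_nonneg_left hkey (Real.exp_nonneg _)
  have hnn : 0 ≤ᵐ[μ] fun ω => Real.exp (lam * (X ω - m) -
      (X ω - a) ^ 2 * ((-Real.log (1 - a * lam) - a * lam) / a ^ 2)) :=
    Filter.Eventually.of_forall fun ω => Real.exp_nonneg _
  calc ∫ ω, Real.exp (lam * (X ω - m) -
        (X ω - a) ^ 2 * ((-Real.log (1 - a * lam) - a * lam) / a ^ 2)) ∂μ
      ≤ ∫ ω, g ω ∂μ := integral_mono_of_nonneg hnn hgint hptwise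
    _ = Real.exp (lam * (a - m)) * (1 + lam * (m - a)) := by
        rw [hg]
        simp only [integral_const_mul]
        have : ∫ ω, (1 + lam * (X ω - a)) ∂μ = 1 + lam * (m - a) := by
          have i1 : Integrable (fun _ : Ω => (1:ℝ)) μ := integrable_const 1
          have i2 : Integrable (fun ω => lam * (X ω - a)) μ := by
            have : Integrable (fun ω => X ω - a) μ := hX.sub (integrable_const a)
            exact this.const_mul lam
          rw [integral_add i1 i2, integral_const_mul]
          have i3 : ∫ ω, (X ω - a) ∂μ = m - a := by
            rw [integral_sub hX (integrable_const a)]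
            simp [hm]
          rw [i3]
          simp
        rw [this]
    _ ≤ Real.exp (lam * (a - m)) * Real.exp (lam * (m - a)) := by
        apply mul_le_mul_of_nonneg_left _ (Real.exp_nonneg _)
        have := Real.add_one_le_exp (lam * (m - a))
        linarith
    _ = 1 := by
        rw [← Real.exp_add]
        have : lam * (a - m) + lam * (m - a) = 0 := by ring
        rw [this, Real.exp_zero]

end RLFA
end

section
/- (Lemma 4.1 of Fan et al., as used in the paper.) Let c > 0, let ξ be a real number with ξ ≥ −c, and let λ ∈ [0, 1/c). Then 1 + λξ ≥ exp(λξ + (ξ²/c²)(log(1 − cλ) + cλ)). -/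
namespace RLFA

/-- Series expansion of `-log(1-b) - b`. -/
private lemma hasSumAux {b : ℝ} (hb : |b| < 1) :
    HasSum (fun n : ℕ => b ^ (n + 2) / (n + 2)) (-Real.log (1 - b) - b) := by
  have H := Real.hasSum_pow_div_log_of_abs_lt_one hb
  have H2 := (hasSum_nat_add_iff' (f := fun n : ℕ => b ^ (n + 1) / (n + 1)) 1).mpr H
  have hsum : ∑ i ∈ Finset.range 1, b ^ (i + 1) / ((i : ℝ) + 1) = b := by simp
  rw [hsum] at H2
  convert H2 using 2 with n
  · rfl
  push_cast
  ring_nf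

private lemma lemA {b : ℝ} (hb0 : 0 ≤ b) (hb1 : b < 1) :
    b ^ 2 / 2 ≤ -Real.log (1 - b) - b := by
  have hb : |b| < 1 := abs_lt.mpr ⟨by linarith, hb1⟩
  have H := hasSumAux hb
  have h := le_hasSum H 0 (fun i _ => by
    have : (0:ℝ) ≤ b ^ (i + 2) := pow_nonneg hb0 _
    positivity)
  norm_num at h
  convert h using 2

private lemma lemC {a b : ℝ} (ha0 : 0 ≤ a) (hab : a ≤ b) (hb1 : b < 1) :
    b ^ 2 * (-Real.log (1 - a) - a) ≤ a ^ 2 * (-Real.log (1 - b) - b) := by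
  have hb0 : 0 ≤ b := le_trans ha0 hab
  have ha1 : a < 1 := lt_of_le_of_lt hab hb1
  have Ha := (hasSumAux (abs_lt.mpr ⟨by linarith, ha1⟩)).mul_left (b ^ 2)
  have Hb := (hasSumAux (abs_lt.mpr ⟨by linarith, hb1⟩)).mul_left (a ^ 2)
  refine hasSum_le (fun n => ?_) Ha Hb
  have hpow : a ^ n ≤ b ^ n := pow_le_pow_left₀ ha0 hab n
  have key : b ^ 2 * a ^ (n + 2) ≤ a ^ 2 * b ^ (n + 2) := by
    calc b ^ 2 * a ^ (n + 2) = (a ^ 2 * b ^ 2) * a ^ n := by ring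
    _ ≤ (a ^ 2 * b ^ 2) * b ^ n :=
        mul_le_mul_of_nonneg_left hpow (by positivity)
    _ = a ^ 2 * b ^ (n + 2) := by ring
  have hn : (0:ℝ) < (n : ℝ) + 2 := by positivity
  rw [mul_div_assoc', mul_div_assoc']
  exact div_le_div_of_nonneg_right key hn.le

private lemma lemB {x : ℝ} (hx : 0 ≤ x) : x - x ^ 2 / 2 ≤ Real.log (1 + x) := by
  have h1 : (0:ℝ) < 1 + x := by linarith
  set u := x / (1 + x) with hu
  have hu0 : 0 ≤ u := div_nonneg hx h1.le
  have hu1 : u < 1 := by rw [hu, div_lt_one h1]; linarith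
  have hA := lemA hu0 hu1
  have hlog : Real.log (1 - u) = -Real.log (1 + x) := by
    have h : 1 - u = (1 + x)⁻¹ := by
      rw [hu]; field_simp; ring
    rw [h, Real.log_inv]
  rw [hlog] at hA
  -- hA : u ^ 2 / 2 ≤ log (1 + x) - u
  have hux : u * (1 + x) = x := by rw [hu]; field_simp
  nlinarith [sq_nonneg (x * x), sq_nonneg x, sq_nonneg u, mul_pos h1 h1]

/-- **Lemma 4.1 of Fan et al..** Let `c > 0`, let `ξ` be a real number with
`ξ ≥ −c`, and let `λ ∈ [0, 1/c)`. Then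
`1 + λξ ≥ exp(λξ + (ξ²/c²)(log(1 − cλ) + cλ))`. -/
theorem statement17
    (c ξ lam : ℝ) (hc : 0 < c) (hξ : -c ≤ ξ) (hlam0 : 0 ≤ lam) (hlam1 : lam < 1 / c) :
    Real.exp (lam * ξ + ξ ^ 2 / c ^ 2 * (Real.log (1 - c * lam) + c * lam)) ≤ 1 + lam * ξ := by
  rcases hlam0.eq_or_lt with rfl | hlam
  · simp
  have hcl : c * lam < 1 := by
    rw [lt_div_iff₀ hc] at hlam1
    linarith [hlam1, mul_comm lam c]
  have hx : -(1:ℝ) < lam * ξ := by nlinarith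
  have h1x : 0 < 1 + lam * ξ := by linarith
  rw [← Real.le_log_iff_exp_le h1x]
  -- goal : lam * ξ + ξ ^ 2 / c ^ 2 * (log (1 - c * lam) + c * lam) ≤ log (1 + lam * ξ)
  rcases le_or_gt 0 ξ with hξ0 | hξ0
  · -- ξ ≥ 0 : use lemA and lemB
    have hA := lemA (mul_nonneg hc.le hlam0) hcl
    have hB := lemB (mul_nonneg hlam0 hξ0)
    have hL : Real.log (1 - c * lam) + c * lam ≤ -((c * lam) ^ 2 / 2) := by linarith
    have hfrac : (0:ℝ) ≤ ξ ^ 2 / c ^ 2 := by positivity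
    have h2 : ξ ^ 2 / c ^ 2 * (Real.log (1 - c * lam) + c * lam)
        ≤ ξ ^ 2 / c ^ 2 * (-((c * lam) ^ 2 / 2)) := mul_le_mul_of_nonneg_left hL hfrac
    have heq : ξ ^ 2 / c ^ 2 * (-((c * lam) ^ 2 / 2)) = -((lam * ξ) ^ 2 / 2) := by
      field_simp
    rw [heq] at h2
    linarith
  · -- ξ < 0 : use lemC with a = -(lam*ξ), b = c*lam
    have ha0 : 0 ≤ -(lam * ξ) := by nlinarith
    have hab : -(lam * ξ) ≤ c * lam := by nlinarith
    have hC := lemC ha0 hab hcl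
    have h1a : 1 - -(lam * ξ) = 1 + lam * ξ := by ring
    rw [h1a] at hC
    have hbb : (0:ℝ) < (c * lam) ^ 2 := by positivity
    have hexp : (c * lam) ^ 2 * (ξ ^ 2 / c ^ 2 * (Real.log (1 - c * lam) + c * lam))
        = (lam * ξ) ^ 2 * (Real.log (1 - c * lam) + c * lam) := by
      field_simp
    have hgoal : (c * lam) ^ 2 * (lam * ξ + ξ ^ 2 / c ^ 2 * (Real.log (1 - c * lam) + c * lam))
        ≤ (c * lam) ^ 2 * Real.log (1 + lam * ξ) := by nlinarith [hC, hexp]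
    exact le_of_mul_le_mul_left hgoal hbb

end RLFA
end

section
/- (Appendix D: recovery of the Waudby-Smith–Ramdas Hoeffding CS.) Let N ≥ 1, let X_1,…,X_t be real numbers with t ≤ N, and let λ_1,…,λ_t be positive reals; set λ'_i = λ_i · N/(N − i + 1) for i = 1,…,t. Then the weighted estimator with uniform weights π(i) = 1/N and uniform without-replacement sampling probabilities q_i(j) = 1/(N − i + 1), namely μ̂_t(λ'_1^t) = [Σ_{i=1}^t λ'_i (((N − i + 1)/N) X_i + (1/N) Σ_{j=1}^{i−1} X_j)] / (Σ_{i=1}^t λ'_i), equals the Waudby-Smith–Ramdas estimator μ̂_t^{WSR}(λ_1^t) = [Σ_{i=1}^t λ_i (X_i + (1/(N − i + 1)) Σ_{j=1}^{i−1} X_j)] / (Σ_{i=1}^t λ_i · N/(N − i + 1)); moreover, taking c_i = (N − i + 1)/N, the corresponding Hoeffding confidence radii agree: (log(2/α) + Σ_{i=1}^t λ'_i² c_i²/8)/(Σ_{i=1}^t λ'_i) = (log(2/α) + Σ_{i=1}^t λ_i²/8)/(Σ_{i=1}^t λ_i · N/(N − i + 1)). -/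
open Finset

namespace RLFA

/-- **Appendix D: recovery of the Waudby-Smith–Ramdas Hoeffding CS.**
Let `N ≥ 1`, let `X_1,…,X_t` be real numbers with `t ≤ N`, and let `λ_1,…,λ_t` be positive
reals; set `λ'_i = λ_i · N/(N − i + 1)` for `i = 1,…,t`. Then the weighted estimator with
uniform weights `π(i) = 1/N` and uniform without-replacement sampling probabilities
`q_i(j) = 1/(N − i + 1)` equals the Waudby-Smith–Ramdas estimator; moreover, taking
`c_i = (N − i + 1)/N`, the corresponding Hoeffding confidence radii agree. -/
theorem statement19
    (N t : ℕ) (hN : 1 ≤ N) (ht1 : 1 ≤ t) (htN : t ≤ N)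
    (X lam : ℕ → ℝ) (hlam_pos : ∀ i ∈ Finset.Icc 1 t, 0 < lam i)
    (α : ℝ) (hα : α ∈ Set.Ioo (0 : ℝ) 1)
    (lam' : ℕ → ℝ) (hlam' : ∀ i, lam' i = lam i * N / ((N : ℝ) - i + 1))
    (c : ℕ → ℝ) (hc : ∀ i, c i = ((N : ℝ) - i + 1) / N) :
    (∑ i ∈ Finset.Icc 1 t, lam' i *
        ((((N : ℝ) - i + 1) / N) * X i + (1 / N) * ∑ j ∈ Finset.Icc 1 (i - 1), X j)) /
      (∑ i ∈ Finset.Icc 1 t, lam' i)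
      = (∑ i ∈ Finset.Icc 1 t, lam i *
          (X i + (1 / ((N : ℝ) - i + 1)) * ∑ j ∈ Finset.Icc 1 (i - 1), X j)) /
        (∑ i ∈ Finset.Icc 1 t, lam i * N / ((N : ℝ) - i + 1)) ∧
    (Real.log (2 / α) + ∑ i ∈ Finset.Icc 1 t, (lam' i) ^ 2 * (c i) ^ 2 / 8) /
      (∑ i ∈ Finset.Icc 1 t, lam' i)
      = (Real.log (2 / α) + ∑ i ∈ Finset.Icc 1 t, (lam i) ^ 2 / 8) /
        (∑ i ∈ Finset.Icc 1 t, lam i * N / ((N : ℝ) - i + 1)) := by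
  have hNne : (N : ℝ) ≠ 0 := by positivity
  have hD : ∀ i ∈ Finset.Icc 1 t, ((N : ℝ) - i + 1) ≠ 0 := by
    intro i hi
    simp only [Finset.mem_Icc] at hi
    have : (i : ℝ) ≤ N := by exact_mod_cast le_trans hi.2 htN
    linarith
  have hden : ∑ i ∈ Finset.Icc 1 t, lam' i
      = ∑ i ∈ Finset.Icc 1 t, lam i * N / ((N : ℝ) - i + 1) :=
    Finset.sum_congr rfl fun i _ => hlam' i
  constructor
  · rw [hden]
    congr 1
    refine Finset.sum_congr rfl fun i hi => ?_
    rw [hlam' i]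
    have h1 := hD i hi
    field_simp
  · rw [hden]
    congr 2
    refine Finset.sum_congr rfl fun i hi => ?_
    rw [hlam' i, hc i]
    have h1 := hD i hi
    field_simp

end RLFA
end
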